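/- Let G = (V, w) be an n-vertex weighted graph and let τ ∈ ℝ satisfy 0 ≤ τ ≤ λ(G). Then at-least-τ-cert(G) = τ-cut-rank(G). -/

import Mathlib

open Finset

variable {H : Type*} [AddCommGroup H] [Module ℝ H]
variable {ι : Type*} [Fintype ι] [DecidableEq ι]

lemma sum_ext_zero (s : Finset ι) (f : ι → H) (hf : ∀ i ∉ s, f i = 0) :
    ∑ i, f i = ∑ i : s, f i := by
  rw [Finset.sum_coe_sort s f]
  exact (Finset.sum_subset s.subset_univ (by intro i _ hi; exact hf i hi)).symm

lemma cone_carath_aux (v : ι → H) : ∀ (N : ℕ) (s : Finset ι) (μ : ι → ℝ),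
    s.card ≤ N → (∀ i, 0 ≤ μ i) → (∀ i ∉ s, μ i = 0) →
    ∃ (t : Finset ι) (ν : ι → ℝ), (∀ i, 0 ≤ ν i) ∧ (∀ i ∉ t, ν i = 0) ∧
      LinearIndependent ℝ (fun i : t => v i) ∧ ∑ i, ν i • v i = ∑ i, μ i • v i := by
  intro N
  induction N with
  | zero =>
    intro s μ hcard hμ0 hμs
    have hs : s = ∅ := Finset.card_eq_zero.mp (Nat.le_zero.mp hcard)
    refine ⟨∅, μ, hμ0, fun i _ => hμs i (by simp [hs]), ?_, rfl⟩
    exact linearIndependent_empty_type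
  | succ N ih =>
    intro s μ hcard hμ0 hμs
    by_cases hli : LinearIndependent ℝ (fun i : s => v i)
    · exact ⟨s, μ, hμ0, hμs, hli, rfl⟩
    · obtain ⟨g, hgsum, i₀, hgi₀⟩ := Fintype.not_linearIndependent_iff.mp hli
      -- extend g to ι, with a positive value somewhere on s
      have key : ∀ c : ι → ℝ, (∀ i ∉ s, c i = 0) → (∑ i, c i • v i = 0) →
          (∃ i ∈ s, 0 < c i) →
          ∃ (t : Finset ι) (ν : ι → ℝ), (∀ i, 0 ≤ ν i) ∧ (∀ i ∉ t, ν i = 0) ∧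
            LinearIndependent ℝ (fun i : t => v i) ∧
            ∑ i, ν i • v i = ∑ i, μ i • v i := by
        intro c hcs hcsum hcpos
        set T : Finset ι := s.filter (fun i => 0 < c i) with hT
        have hTne : T.Nonempty := by
          obtain ⟨i, hi, hci⟩ := hcpos
          exact ⟨i, by simp [hT, hi, hci]⟩
        obtain ⟨t₀, ht₀T, ht₀min⟩ := T.exists_min_image (fun i => μ i / c i) hTne
        have ht₀s : t₀ ∈ s := (Finset.mem_filter.mp ht₀T).1
        have hct₀ : 0 < c t₀ := (Finset.mem_filter.mp ht₀T).2
        set r : ℝ := μ t₀ / c t₀ with hr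
        have hr0 : 0 ≤ r := div_nonneg (hμ0 t₀) hct₀.le
        set ν : ι → ℝ := fun i => μ i - r * c i with hν
        have hν0 : ∀ i, 0 ≤ ν i := by
          intro i
          by_cases hiT : i ∈ T
          · have hci : 0 < c i := (Finset.mem_filter.mp hiT).2
            have := ht₀min i hiT
            have : r * c i ≤ μ i := by
              rw [hr] at *
              calc r * c i ≤ (μ i / c i) * c i := by
                    exact mul_le_mul_of_nonneg_right (ht₀min i hiT) hci.le
                _ = μ i := div_mul_cancel₀ _ hci.ne'
            simp [hν]; linarith
          · by_cases his : i ∈ s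
            · have hci : c i ≤ 0 := by
                by_contra h
                exact hiT (Finset.mem_filter.mpr ⟨his, lt_of_not_ge h⟩)
              have : r * c i ≤ 0 := mul_nonpos_of_nonneg_of_nonpos hr0 hci
              have := hμ0 i
              simp [hν]; linarith
            · simp [hν, hμs i his, hcs i his]
        have hνsupp : ∀ i ∉ s.erase t₀, ν i = 0 := by
          intro i hi
          by_cases hit : i = t₀
          · subst hit
            simp only [hν, hr]
            field_simp
            ring
          · have his : i ∉ s := fun h => hi (Finset.mem_erase.mpr ⟨hit, h⟩)
            simp [hν, hμs i his, hcs i his]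
        have hνsum : ∑ i, ν i • v i = ∑ i, μ i • v i := by
          simp only [hν, sub_smul, Finset.sum_sub_distrib, mul_smul]
          rw [← Finset.smul_sum, hcsum, smul_zero, sub_zero]
        have hcard' : (s.erase t₀).card ≤ N := by
          have := Finset.card_erase_of_mem ht₀s
          omega
        obtain ⟨t, ν', h1, h2, h3, h4⟩ := ih (s.erase t₀) ν hcard' hν0 hνsupp
        exact ⟨t, ν', h1, h2, h3, h4.trans hνsum⟩
      set c0 : ι → ℝ := fun i => if h : i ∈ s then g ⟨i, h⟩ else 0 with hc0
      have hc0s : ∀ i ∉ s, c0 i = 0 := by intro i hi; simp [hc0, hi]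
      have hc0sum : ∑ i, c0 i • v i = 0 := by
        rw [sum_ext_zero s _ (fun i hi => by rw [hc0s i hi, zero_smul]), ← hgsum]
        exact Finset.sum_congr rfl (fun i _ => by simp [hc0, i.2])
      rcases lt_or_gt_of_ne hgi₀ with hneg | hpos
      · refine key (-c0) (fun i hi => by simp [hc0s i hi])
          (by simp only [Pi.neg_apply, neg_smul, Finset.sum_neg_distrib, hc0sum, neg_zero])
          ⟨i₀, i₀.2, by simpa [hc0] using hneg⟩
      · exact key c0 hc0s hc0sum ⟨i₀, i₀.2, by simpa [hc0] using hpos⟩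

lemma cone_carath (v : ι → H) (μ : ι → ℝ) (hμ : ∀ i, 0 ≤ μ i) :
    ∃ (t : Finset ι) (ν : ι → ℝ), (∀ i, 0 ≤ ν i) ∧ (∀ i ∉ t, ν i = 0) ∧
      LinearIndependent ℝ (fun i : t => v i) ∧ ∑ i, ν i • v i = ∑ i, μ i • v i :=
  cone_carath_aux v (Finset.univ.card) Finset.univ μ le_rfl hμ (by simp)

section Closed
variable {E : Type*} [NormedAddCommGroup E] [NormedSpace ℝ E] [FiniteDimensional ℝ E]

lemma isClosed_genCone (v : ι → E) :
    IsClosed {x : E | ∃ μ : ι → ℝ, (∀ i, 0 ≤ μ i) ∧ ∑ i, μ i • v i = x} := by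
  have key : {x : E | ∃ μ : ι → ℝ, (∀ i, 0 ≤ μ i) ∧ ∑ i, μ i • v i = x} =
      ⋃ (t : Finset ι), ⋃ (_ : LinearIndependent ℝ (fun i : t => v i)),
        (fun μ : t → ℝ => ∑ i : t, μ i • v i.1) '' {μ | ∀ i, 0 ≤ μ i} := by
    ext x
    simp only [Set.mem_setOf_eq, Set.mem_iUnion, Set.mem_image]
    constructor
    · rintro ⟨μ, hμ, rfl⟩
      obtain ⟨t, ν, hν0, hνs, hli, hsum⟩ := cone_carath v μ hμ
      refine ⟨t, hli, fun i => ν i, fun i => hν0 i, ?_⟩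
      rw [← hsum]
      exact (sum_ext_zero t (fun i => ν i • v i) (fun i hi => by simp [hνs i hi])).symm
    · rintro ⟨t, hli, μ, hμ0, rfl⟩
      classical
      refine ⟨fun i => if h : i ∈ t then μ ⟨i, h⟩ else 0, ?_, ?_⟩
      · intro i
        dsimp only
        split
        · exact hμ0 _
        · exact le_rfl
      rw [sum_ext_zero t _ (fun i hi => by simp [hi])]
      exact Finset.sum_congr rfl (fun i _ => by simp [i.2])
  rw [key]
  apply isClosed_iUnion_of_finite
  intro t
  apply isClosed_iUnion_of_finite
  intro hli
  have hinj : Function.Injective (fun μ : t → ℝ => ∑ i : t, μ i • v i.1) := by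
    have := Fintype.linearIndependent_iff.mp hli
    intro μ μ' h
    funext i
    have : ∀ j, (μ - μ') j = 0 := this (μ - μ') (by
      simp only [Pi.sub_apply, sub_smul, Finset.sum_sub_distrib]
      simp only at h
      rw [h, sub_self])
    have := this i
    simp only [Pi.sub_apply, sub_eq_zero] at this
    exact this
  let f : (t → ℝ) →ₗ[ℝ] E :=
    { toFun := fun μ => ∑ i : t, μ i • v i.1
      map_add' := by intro a b; simp [add_smul, Finset.sum_add_distrib]
      map_smul' := by intro c a; simp [mul_smul, Finset.smul_sum] }
  have hce := LinearMap.isClosedEmbedding_of_injective (f := f)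
    (LinearMap.ker_eq_bot.mpr hinj)
  have hcl : IsClosed {μ : t → ℝ | ∀ i, 0 ≤ μ i} := by
    have : {μ : t → ℝ | ∀ i, 0 ≤ μ i} = ⋂ i, {μ | 0 ≤ μ i} := by ext; simp
    rw [this]
    exact isClosed_iInter (fun i => isClosed_le continuous_const (continuous_apply i))
  exact hce.isClosedMap _ hcl
end Closed

section Farkas
open RealInnerProductSpace
variable {E : Type*} [NormedAddCommGroup E] [InnerProductSpace ℝ E] [FiniteDimensional ℝ E]

lemma farkas_dichotomy (v : ι → E) (b : E) :
    (∃ μ : ι → ℝ, (∀ i, 0 ≤ μ i) ∧ ∑ i, μ i • v i = b) ∨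
    (∃ y : E, (∀ i, 0 ≤ ⟪v i, y⟫) ∧ ⟪y, b⟫ < 0) := by
  by_cases hb : ∃ μ : ι → ℝ, (∀ i, 0 ≤ μ i) ∧ ∑ i, μ i • v i = b
  · exact Or.inl hb
  · right
    let K : ConvexCone ℝ E :=
      { carrier := {x : E | ∃ μ : ι → ℝ, (∀ i, 0 ≤ μ i) ∧ ∑ i, μ i • v i = x}
        smul_mem' := by
          rintro c hc x ⟨μ, hμ, rfl⟩
          exact ⟨fun i => c * μ i, fun i => mul_nonneg hc.le (hμ i),
            by simp [mul_smul, Finset.smul_sum]⟩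
        add_mem' := by
          rintro x ⟨μ, hμ, rfl⟩ y ⟨ν, hν, rfl⟩
          exact ⟨fun i => μ i + ν i, fun i => add_nonneg (hμ i) (hν i),
            by simp [add_smul, Finset.sum_add_distrib]⟩ }
    have hne : (K : Set E).Nonempty := ⟨0, ⟨fun _ => 0, fun _ => le_rfl, by simp⟩⟩
    have hcl : IsClosed (K : Set E) := isClosed_genCone v
    have hbK : b ∉ K := hb
    obtain ⟨y, hy1, hy2⟩ :=
      ProperCone.hyperplane_separation'
        (⟨K.toPointedCone (.of_nonempty_of_isClosed hne hcl), hcl⟩ : ProperCone ℝ E) hbK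
    refine ⟨y, fun i => ?_, by rwa [real_inner_comm] at hy2⟩
    apply hy1
    exact ⟨fun j => if j = i then 1 else 0, fun j => by positivity,
      by simp [ite_smul]⟩

lemma farkas_mixed {κ : Type*} [Fintype κ] (v : ι → E) (g : κ → E) (d : E) :
    (∃ (y : ι → ℝ) (s : κ → ℝ), (∀ j, 0 ≤ s j) ∧
        ∑ i, y i • v i + ∑ j, s j • g j = d) ∨
    (∃ z : E, (∀ i, ⟪v i, z⟫ = 0) ∧ (∀ j, 0 ≤ ⟪g j, z⟫) ∧ ⟪z, d⟫ < 0) := by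
  classical
  rcases farkas_dichotomy (Sum.elim (Sum.elim v (fun i => -v i)) g) d with ⟨μ, hμ, hsum⟩ | ⟨z, hz, hzd⟩
  · left
    refine ⟨fun i => μ (Sum.inl (Sum.inl i)) - μ (Sum.inl (Sum.inr i)),
      fun j => μ (Sum.inr j), fun j => hμ _, ?_⟩
    rw [← hsum, Fintype.sum_sum_type, Fintype.sum_sum_type]
    simp only [Sum.elim_inl, Sum.elim_inr, sub_smul, smul_neg, Finset.sum_sub_distrib,
      Finset.sum_neg_distrib]
    abel
  · right
    refine ⟨z, fun i => ?_, fun j => hz (Sum.inr j), hzd⟩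
    have h1 := hz (Sum.inl (Sum.inl i))
    have h2 := hz (Sum.inl (Sum.inr i))
    simp only [Sum.elim_inl, Sum.elim_inr, inner_neg_left] at h1 h2
    linarith
end Farkas
-- ===== original definitions =====



open Finset Matrix

/-- The set of edge slots: 2-element subsets of the vertex set `Fin n`. -/
abbrev EdgeSlot (n : ℕ) := {e : Finset (Fin n) // e.card = 2}

/-- Weight of the cut with shore `S`: sum of weights of edge slots with exactly
one endpoint in `S`. -/
noncomputable def cutWeight (n : ℕ) (w : EdgeSlot n → ℝ) (S : Finset (Fin n)) : ℝ :=
  ∑ e : EdgeSlot n, if (e.1 ∩ S).card = 1 then w e else 0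

/-- `λ(G)`: the minimum cut weight over all shores `∅ ≠ S ⊊ V`. -/
noncomputable def minCutVal (n : ℕ) (w : EdgeSlot n → ℝ) : ℝ :=
  sInf {x : ℝ | ∃ S : Finset (Fin n), S.Nonempty ∧ S ≠ Finset.univ ∧ cutWeight n w S = x}

/-- The at-least-τ linear-query certificate complexity: the least `k` such that some
`k`-row query matrix `A` certifies that every nonnegative `w'` consistent with the
answers on `w` has minimum cut value at least `τ`. -/
noncomputable def atLeastCert (n : ℕ) (τ : ℝ) (w : EdgeSlot n → ℝ) : ℕ :=
  sInf {k : ℕ | ∃ A : Matrix (Fin k) (EdgeSlot n) ℝ,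
    ∀ w' : EdgeSlot n → ℝ, (∀ e, 0 ≤ w' e) → A.mulVec w = A.mulVec w' →
      τ ≤ minCutVal n w'}

/-- The minimum-cut linear-query certificate complexity. -/
noncomputable def mincutCert (n : ℕ) (w : EdgeSlot n → ℝ) : ℕ :=
  sInf {k : ℕ | ∃ A : Matrix (Fin k) (EdgeSlot n) ℝ,
    ∀ w' : EdgeSlot n → ℝ, (∀ e, 0 ≤ w' e) → A.mulVec w = A.mulVec w' →
      minCutVal n w' = minCutVal n w}

/-- The connectivity linear-query certificate complexity. -/
noncomputable def conCert (n : ℕ) (w : EdgeSlot n → ℝ) : ℕ :=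
  sInf {k : ℕ | ∃ A : Matrix (Fin k) (EdgeSlot n) ℝ,
    ∀ w' : EdgeSlot n → ℝ, (∀ e, 0 ≤ w' e) → A.mulVec w = A.mulVec w' →
      (0 < minCutVal n w' ↔ 0 < minCutVal n w)}

/-- Row indices of the universal cut-edge incidence matrix: nonempty sets of
vertices not containing vertex `1` (represented as `0 : Fin n`). -/
abbrev Shore (n : ℕ) [NeZero n] := {S : Finset (Fin n) // S.Nonempty ∧ (0 : Fin n) ∉ S}

/-- The universal cut-edge incidence matrix `M_n`. -/
noncomputable def Mn (n : ℕ) [NeZero n] : Matrix (Shore n) (EdgeSlot n) ℝ :=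
  fun S e => if (e.1 ∩ S.1).card = 1 then 1 else 0

/-- `τ`-cut-rank of a graph: the minimum rank of a matrix `X ≤ M_n` (entrywise)
with every entry of `Xw` at least `τ`. -/
noncomputable def cutRank (n : ℕ) [NeZero n] (τ : ℝ) (w : EdgeSlot n → ℝ) : ℕ :=
  sInf {r : ℕ | ∃ X : Matrix (Shore n) (EdgeSlot n) ℝ,
    (∀ S e, X S e ≤ Mn n S e) ∧ (∀ S, τ ≤ X.mulVec w S) ∧ X.rank = r}

/-- The weight vector of the `n`-cycle with unit weights. -/
noncomputable def cycleWeight (n : ℕ) [NeZero n] : EdgeSlot n → ℝ :=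
  fun e => if ∃ i : Fin n, e.1 = {i, i + 1} then 1 else 0


-- ===== graph helper lemmas =====
section Graph
variable {n : ℕ}

lemma cutWeight_eq_sum_Mn [NeZero n] (w : EdgeSlot n → ℝ) (S : Shore n) :
    cutWeight n w S.1 = ∑ e : EdgeSlot n, Mn n S e * w e := by
  unfold cutWeight Mn
  refine Finset.sum_congr rfl (fun e _ => ?_)
  split <;> simp

lemma cutWeight_eq_mulVec [NeZero n] (w : EdgeSlot n → ℝ) (S : Shore n) :
    cutWeight n w S.1 = (Mn n *ᵥ w) S := by
  rw [cutWeight_eq_sum_Mn]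
  rfl

lemma Mn_nonneg [NeZero n] (S : Shore n) (e : EdgeSlot n) : 0 ≤ Mn n S e := by
  unfold Mn; split <;> norm_num

lemma cutWeight_nonneg (w : EdgeSlot n → ℝ) (hw : ∀ e, 0 ≤ w e) (S : Finset (Fin n)) :
    0 ≤ cutWeight n w S := by
  apply Finset.sum_nonneg
  intro e _
  split
  · exact hw e
  · exact le_rfl

lemma cutSet_bddBelow (w : EdgeSlot n → ℝ) (hw : ∀ e, 0 ≤ w e) :
    BddBelow {x : ℝ | ∃ S : Finset (Fin n), S.Nonempty ∧ S ≠ Finset.univ ∧ cutWeight n w S = x} := by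
  refine ⟨0, ?_⟩
  rintro x ⟨S, _, _, rfl⟩
  exact cutWeight_nonneg w hw S

lemma minCutVal_le_cutWeight (w : EdgeSlot n → ℝ) (hw : ∀ e, 0 ≤ w e)
    (S : Finset (Fin n)) (h1 : S.Nonempty) (h2 : S ≠ Finset.univ) :
    minCutVal n w ≤ cutWeight n w S :=
  csInf_le (cutSet_bddBelow w hw) ⟨S, h1, h2, rfl⟩

lemma shore_ne_univ [NeZero n] (S : Shore n) : S.1 ≠ Finset.univ :=
  fun h => S.2.2 (h ▸ Finset.mem_univ (0 : Fin n))

lemma cutWeight_compl (w : EdgeSlot n → ℝ) (S : Finset (Fin n)) :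
    cutWeight n w Sᶜ = cutWeight n w S := by
  unfold cutWeight
  refine Finset.sum_congr rfl (fun e _ => ?_)
  have hcard : (e.1 ∩ S).card + (e.1 ∩ Sᶜ).card = 2 := by
    rw [Finset.compl_eq_univ_sdiff, ← Finset.inter_sdiff_assoc, Finset.inter_univ,
      Finset.card_inter_add_card_sdiff]
    exact e.2
  by_cases h : (e.1 ∩ S).card = 1
  · rw [if_pos h, if_pos (by omega)]
  · rw [if_neg h, if_neg (by omega)]

lemma le_minCutVal_of_cuts [NeZero n] (τ : ℝ) (w w' : EdgeSlot n → ℝ)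
    (hτw : τ ≤ minCutVal n w)
    (h : ∀ T : Shore n, τ ≤ cutWeight n w' T.1) : τ ≤ minCutVal n w' := by
  by_cases hne : ∃ S : Finset (Fin n), S.Nonempty ∧ S ≠ Finset.univ
  · apply le_csInf
    · obtain ⟨S, h1, h2⟩ := hne
      exact ⟨_, S, h1, h2, rfl⟩
    · rintro x ⟨S, h1, h2, rfl⟩
      by_cases h0 : (0 : Fin n) ∈ S
      · rw [← cutWeight_compl]
        refine h ⟨Sᶜ, ?_, by simp [h0]⟩
        exact Finset.nonempty_iff_ne_empty.mpr
          (fun hc => h2 (by simpa [Finset.compl_eq_empty_iff] using hc))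
      · exact h ⟨S, h1, h0⟩
  · push_neg at hne
    have hempty : ∀ u : EdgeSlot n → ℝ,
        {x : ℝ | ∃ S : Finset (Fin n), S.Nonempty ∧ S ≠ Finset.univ ∧ cutWeight n u S = x} = ∅ := by
      intro u
      ext x
      simp only [Set.mem_setOf_eq, Set.mem_empty_iff_false, iff_false]
      rintro ⟨S, hS1, hS2, _⟩
      exact hS2 (hne S hS1)
    unfold minCutVal at *
    rw [hempty w'] at *
    rw [hempty w] at hτw
    exact hτw
end Graph

section PartA
variable {n : ℕ} [NeZero n]

lemma partA (w : EdgeSlot n → ℝ) (τ : ℝ) (hτw : τ ≤ minCutVal n w)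
    (X : Matrix (Shore n) (EdgeSlot n) ℝ)
    (hXM : ∀ S e, X S e ≤ Mn n S e) (hXw : ∀ S, τ ≤ X.mulVec w S) :
    ∃ A : Matrix (Fin X.rank) (EdgeSlot n) ℝ,
      ∀ w' : EdgeSlot n → ℝ, (∀ e, 0 ≤ w' e) → A.mulVec w = A.mulVec w' →
        τ ≤ minCutVal n w' := by
  classical
  set R : Submodule ℝ (EdgeSlot n → ℝ) := Submodule.span ℝ (Set.range X) with hR
  have hrank : X.rank = Module.finrank ℝ R := X.rank_eq_finrank_span_row
  have : FiniteDimensional ℝ R := inferInstance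
  let b : Module.Basis (Fin (Module.finrank ℝ R)) ℝ R := Module.finBasis ℝ R
  refine ⟨fun i e => (b (Fin.cast hrank i) : EdgeSlot n → ℝ) e, ?_⟩
  intro w' hw' hA
  -- the linear functional u ↦ u ⬝ᵥ w - u ⬝ᵥ w' vanishes on R
  let f : (EdgeSlot n → ℝ) →ₗ[ℝ] ℝ :=
    { toFun := fun u => (∑ e, u e * w e) - (∑ e, u e * w' e)
      map_add' := by
        intro a c
        simp [add_mul, Finset.sum_add_distrib]
        ring
      map_smul' := by
        intro c a
        simp [mul_assoc, ← Finset.mul_sum, mul_sub] }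
  have hfb : ∀ j : Fin (Module.finrank ℝ R), f (b j) = 0 := by
    intro j
    have := congrFun hA (Fin.cast hrank.symm j)
    simp only [Matrix.mulVec, dotProduct] at this
    simp only [f, LinearMap.coe_mk, AddHom.coe_mk]
    rw [sub_eq_zero]
    simpa using this
  have hfR : ∀ u ∈ R, f u = 0 := by
    intro u hu
    have : f.comp R.subtype = 0 := b.ext (fun j => by simpa using hfb j)
    have := congrArg (fun g => g ⟨u, hu⟩) (congrArg DFunLike.coe this)
    simpa using this
  have hXw' : ∀ S : Shore n, (X.mulVec w') S = (X.mulVec w) S := by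
    intro S
    have hmem : X S ∈ R := Submodule.subset_span ⟨S, rfl⟩
    have := hfR (X S) hmem
    simp only [f, LinearMap.coe_mk, AddHom.coe_mk, sub_eq_zero] at this
    simp only [Matrix.mulVec, dotProduct]
    exact this.symm
  apply le_minCutVal_of_cuts τ w w' hτw
  intro T
  calc τ ≤ (X.mulVec w) T := hXw T
    _ = (X.mulVec w') T := (hXw' T).symm
    _ ≤ (Mn n *ᵥ w') T := by
        simp only [Matrix.mulVec, dotProduct]
        exact Finset.sum_le_sum (fun e _ => mul_le_mul_of_nonneg_right (hXM T e) (hw' e))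
    _ = cutWeight n w' T.1 := (cutWeight_eq_mulVec w' T).symm
end PartA

section PartB
open RealInnerProductSpace
variable {n : ℕ} [NeZero n]

lemma partB_shore (w : EdgeSlot n → ℝ) (hw : ∀ e, 0 ≤ w e) (τ : ℝ)
    {k : ℕ} (A : Matrix (Fin k) (EdgeSlot n) ℝ)
    (hA : ∀ w' : EdgeSlot n → ℝ, (∀ e, 0 ≤ w' e) → A.mulVec w = A.mulVec w' →
      τ ≤ minCutVal n w') (S : Shore n) :
    ∃ y : Fin k → ℝ, (∀ e, ∑ j, y j * A j e ≤ Mn n S e) ∧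
      τ ≤ ∑ j, y j * (A.mulVec w) j := by
  classical
  set κ := (EdgeSlot n ⊕ Unit)
  set E := EuclideanSpace ℝ κ
  let L : E ≃ₗ[ℝ] (κ → ℝ) := WithLp.linearEquiv 2 ℝ (κ → ℝ)
  let fv : Fin k → (κ → ℝ) := fun j => Sum.elim (fun e => A j e) (fun _ => -((A.mulVec w) j))
  let fg : κ → (κ → ℝ) := fun q => Pi.single q 1
  let fd : κ → ℝ := Sum.elim (fun e => Mn n S e) (fun _ => -τ)
  rcases farkas_mixed (fun j => L.symm (fv j)) (fun q => L.symm (fg q)) (L.symm fd) with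
    ⟨y, s, hs, heq⟩ | ⟨z, hz1, hz2, hz3⟩
  · -- dual solution exists
    have heq' : (∑ i, y i • fv i) + (∑ q, s q • fg q) = fd := by
      have := congrArg L heq
      simpa [map_add, map_sum, _root_.map_smul] using this
    refine ⟨y, fun e => ?_, ?_⟩
    · have := congrFun heq' (Sum.inl e)
      simp only [Pi.add_apply, Finset.sum_apply, Pi.smul_apply, smul_eq_mul, fv, fg, fd,
        Sum.elim_inl, Pi.single_apply, mul_ite, mul_one, mul_zero] at this
      rw [Finset.sum_ite_eq Finset.univ (Sum.inl e) s] at this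
      simp only [Finset.mem_univ, if_true] at this
      have := hs (Sum.inl e)
      linarith
    · have := congrFun heq' (Sum.inr ())
      simp only [Pi.add_apply, Finset.sum_apply, Pi.smul_apply, smul_eq_mul, fv, fg, fd,
        Sum.elim_inr, Pi.single_apply, mul_ite, mul_one, mul_zero] at this
      rw [Finset.sum_ite_eq Finset.univ (Sum.inr ()) s] at this
      simp only [Finset.mem_univ, if_true, mul_neg] at this
      have hsnn := hs (Sum.inr ())
      have : (∑ j, -(y j * (A.mulVec w) j)) + s (Sum.inr ()) = -τ := this
      rw [Finset.sum_neg_distrib] at this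
      linarith
  · -- separation: contradiction with the certificate property
    exfalso
    set x : EdgeSlot n → ℝ := fun e => z (Sum.inl e) with hx
    set μ : ℝ := z (Sum.inr ()) with hμ
    have hinner : ∀ f : κ → ℝ, ⟪L.symm f, z⟫ = ∑ p, f p * z p := by
      intro f
      rw [PiLp.inner_apply]
      refine Finset.sum_congr rfl (fun p _ => ?_)
      simp [L, RCLike.inner_apply, conj_trivial, WithLp.linearEquiv, mul_comm]
    have hzd : ∑ p, fd p * z p < 0 := by
      have : ⟪z, L.symm fd⟫ < 0 := hz3
      rwa [real_inner_comm, hinner] at this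
    have hx0 : ∀ e, 0 ≤ x e := by
      intro e
      have := hz2 (Sum.inl e)
      rw [hinner] at this
      rw [Finset.sum_eq_single (Sum.inl e) (fun b _ hb => by simp [fg, Pi.single_apply, hb]) (by simp)] at this
      simpa [fg, hx] using this
    have hμ0 : 0 ≤ μ := by
      have := hz2 (Sum.inr ())
      rw [hinner] at this
      rw [Finset.sum_eq_single (Sum.inr ()) (fun b _ hb => by simp [fg, Pi.single_apply, hb]) (by simp)] at this
      simpa [fg, hμ] using this
    have hAx : ∀ j, ∑ e, A j e * x e = (A.mulVec w) j * μ := by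
      intro j
      have h0 := hz1 j
      rw [hinner] at h0
      rw [Fintype.sum_sum_type] at h0
      simp only [fv, Sum.elim_inl, Sum.elim_inr, Fintype.sum_unique, neg_mul] at h0
      have h0' : (∑ e, A j e * z (Sum.inl e)) + -((A.mulVec w) j * z (Sum.inr ())) = 0 := h0
      simp only [hx, hμ]
      linarith
    have hcut : ∑ e, Mn n S e * x e < μ * τ := by
      rw [Fintype.sum_sum_type] at hzd
      simp only [fd, Sum.elim_inl, Sum.elim_inr, Fintype.sum_unique, neg_mul] at hzd
      rw [← hμ] at hzd
      linarith
    rcases eq_or_lt_of_le hμ0 with hμz | hμpos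
    · have h0 : (0:ℝ) ≤ ∑ e, Mn n S e * x e :=
        Finset.sum_nonneg (fun e _ => mul_nonneg (Mn_nonneg S e) (hx0 e))
      rw [← hμz, zero_mul] at hcut
      linarith
    · set w' : EdgeSlot n → ℝ := fun e => x e / μ with hw'
      have hw'0 : ∀ e, 0 ≤ w' e := fun e => div_nonneg (hx0 e) hμ0
      have hAw' : A.mulVec w = A.mulVec w' := by
        funext j
        simp only [Matrix.mulVec, dotProduct, hw']
        rw [eq_comm]
        calc ∑ e, A j e * (x e / μ) = (∑ e, A j e * x e) / μ := by
              rw [Finset.sum_div]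
              exact Finset.sum_congr rfl (fun e _ => by ring)
          _ = ((A.mulVec w) j * μ) / μ := by rw [hAx j]
          _ = (A.mulVec w) j := mul_div_cancel_right₀ _ hμpos.ne'
      have h1 : τ ≤ minCutVal n w' := hA w' hw'0 hAw'
      have h2 : minCutVal n w' ≤ cutWeight n w' S.1 :=
        minCutVal_le_cutWeight w' hw'0 S.1 S.2.1 (shore_ne_univ S)
      have h3 : cutWeight n w' S.1 = (∑ e, Mn n S e * x e) / μ := by
        rw [cutWeight_eq_sum_Mn, Finset.sum_div]
        exact Finset.sum_congr rfl (fun e _ => by rw [hw']; ring)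
      have h4 : μ * τ ≤ ∑ e, Mn n S e * x e := by
        have := h1.trans (h2.trans_eq h3)
        rwa [le_div_iff₀ hμpos, mul_comm τ μ] at this
      linarith
end PartB

section Main
variable {n : ℕ} [NeZero n]

lemma partB (w : EdgeSlot n → ℝ) (hw : ∀ e, 0 ≤ w e) (τ : ℝ)
    {k : ℕ} (A : Matrix (Fin k) (EdgeSlot n) ℝ)
    (hA : ∀ w' : EdgeSlot n → ℝ, (∀ e, 0 ≤ w' e) → A.mulVec w = A.mulVec w' →
      τ ≤ minCutVal n w') :
    ∃ X : Matrix (Shore n) (EdgeSlot n) ℝ,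
      (∀ S e, X S e ≤ Mn n S e) ∧ (∀ S, τ ≤ X.mulVec w S) ∧ X.rank ≤ k := by
  classical
  choose y hy1 hy2 using fun S => partB_shore w hw τ A hA S
  refine ⟨(Matrix.of fun S j => y S j) * A, ?_, ?_, ?_⟩
  · intro S e
    rw [Matrix.mul_apply]
    exact hy1 S e
  · intro S
    rw [← Matrix.mulVec_mulVec]
    exact hy2 S
  · exact (Matrix.rank_mul_le_right _ A).trans
      (A.rank_le_card_height.trans (by simp))

lemma certSet_nonempty (w : EdgeSlot n → ℝ) (τ : ℝ) (hτ : τ ≤ minCutVal n w) :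
    {k : ℕ | ∃ A : Matrix (Fin k) (EdgeSlot n) ℝ,
      ∀ w' : EdgeSlot n → ℝ, (∀ e, 0 ≤ w' e) → A.mulVec w = A.mulVec w' →
        τ ≤ minCutVal n w'}.Nonempty := by
  classical
  set σ := Fintype.equivFin (EdgeSlot n)
  refine ⟨Fintype.card (EdgeSlot n),
    fun i e => if e = σ.symm i then 1 else 0, fun w' hw' hA => ?_⟩
  have hww' : w = w' := by
    funext e
    have := congrFun hA (σ e)
    simp only [Matrix.mulVec, dotProduct, ite_mul, one_mul, zero_mul,
      Equiv.symm_apply_apply, Finset.sum_ite_eq' Finset.univ e, Finset.mem_univ, if_true] at this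
    exact this
  rwa [← hww']

theorem atLeastCert_eq_cutRank' (n : ℕ) [NeZero n] (w : EdgeSlot n → ℝ)
    (hw : ∀ e, 0 ≤ w e) (τ : ℝ) (hτ0 : 0 ≤ τ) (hτ : τ ≤ minCutVal n w) :
    atLeastCert n τ w = cutRank n τ w := by
  apply le_antisymm
  · -- from an optimal X construct a certificate
    have hXne : {r : ℕ | ∃ X : Matrix (Shore n) (EdgeSlot n) ℝ,
        (∀ S e, X S e ≤ Mn n S e) ∧ (∀ S, τ ≤ X.mulVec w S) ∧ X.rank = r}.Nonempty := by
      refine ⟨(Mn n).rank, Mn n, fun S e => le_rfl, fun S => ?_, rfl⟩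
      rw [← cutWeight_eq_mulVec]
      exact hτ.trans (minCutVal_le_cutWeight w hw S.1 S.2.1 (shore_ne_univ S))
    obtain ⟨X, hXM, hXw, hXr⟩ := Nat.sInf_mem hXne
    obtain ⟨A, hA⟩ := partA w τ hτ X hXM hXw
    have h1 : atLeastCert n τ w ≤ X.rank := Nat.sInf_le ⟨A, hA⟩
    have h2 : X.rank = cutRank n τ w := hXr
    exact h1.trans_eq h2
  · -- from an optimal certificate construct X
    obtain ⟨A, hA⟩ := Nat.sInf_mem (certSet_nonempty w τ hτ)
    obtain ⟨X, hXM, hXw, hXr⟩ := partB w hw τ A hA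
    have h1 : cutRank n τ w ≤ X.rank := Nat.sInf_le ⟨X, hXM, hXw, rfl⟩
    exact h1.trans hXr
end Main

/-- For any `n`-vertex weighted graph `G = (V, w)` and `0 ≤ τ ≤ λ(G)`,
`at-least-τ-cert(G) = τ-cut-rank(G)`. -/
theorem atLeastCert_eq_cutRank (n : ℕ) [NeZero n] (w : EdgeSlot n → ℝ)
    (hw : ∀ e, 0 ≤ w e) (τ : ℝ) (hτ0 : 0 ≤ τ) (hτ : τ ≤ minCutVal n w) :
    atLeastCert n τ w = cutRank n τ w := by
  exact atLeastCert_eq_cutRank' n w hw τ hτ0 hτ
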